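/- Let K_{σ1,σ2} be a complete bipartite fuzzy graph with |X| = 2 and |Y| ≥ 3, where μ_s(x_1) ≤ μ_s(x_2). Then γ_snR(K_{σ1,σ2}) = min{4μ_s(x_1), 2μ_s(x_1) + μ_s(x_2)}. -/

import Mathlib

noncomputable section
open scoped Classical
open Finset

/-- A fuzzy graph on a vertex set `V`. -/
structure FuzzyGraph (V : Type*) where
  σ : V → ℝ
  μ : V → V → ℝ
  σ_nonneg : ∀ v, 0 ≤ σ v
  σ_le_one : ∀ v, σ v ≤ 1
  μ_nonneg : ∀ u v, 0 ≤ μ u v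
  μ_symm : ∀ u v, μ u v = μ v u
  μ_le : ∀ u v, μ u v ≤ min (σ u) (σ v)
  μ_irrefl : ∀ v, μ v v = 0

namespace FuzzyGraph

variable {V : Type*} (G : FuzzyGraph V)

/-- The strength of a walk (given as its list of vertices): the minimum
membership value of its edges (1 for walks without edges). -/
def walkStrength (l : List V) : ℝ :=
  ((l.zip l.tail).map fun p => G.μ p.1 p.2).foldr min 1

/-- `l` is a `u`–`v` walk: it starts at `u`, ends at `v`, and consecutive
vertices are joined by edges of positive membership. -/
def IsWalk (u v : V) (l : List V) : Prop :=
  l.head? = some u ∧ l.getLast? = some v ∧ l.Chain' (fun a b => 0 < G.μ a b)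

/-- `CONN_G(u,v)`: the maximum strength over all `u`–`v` paths. -/
def conn (u v : V) : ℝ :=
  sSup {s | ∃ l : List V, G.IsWalk u v l ∧ 2 ≤ l.length ∧ s = G.walkStrength l}

/-- The edge `(u,v)` is strong. -/
def StrongEdge (u v : V) : Prop :=
  0 < G.μ u v ∧ G.μ u v = G.conn u v

/-- `μ_s(u)`: the minimum membership value among strong edges at `u`
(`0` if `u` has no strong neighbor, via `Real.sInf_empty`). -/
def mus (u : V) : ℝ :=
  sInf {x | ∃ v, G.StrongEdge u v ∧ x = G.μ u v}

/-- The strong neighborhood degree `d_SN(v)`. -/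
def dSN [Fintype V] (v : V) : ℝ :=
  ∑ u ∈ Finset.univ.filter (fun u => G.StrongEdge v u), G.σ u

/-- `D` is a strong dominating set. -/
def IsStrongDomSet (D : Finset V) : Prop :=
  ∀ v, v ∉ D → ∃ u ∈ D, G.StrongEdge v u

/-- The weight of a strong dominating set. -/
def domWeight (D : Finset V) : ℝ := ∑ u ∈ D, G.mus u

/-- The strong domination number `γ_s(G)`. -/
def gammaS [Fintype V] : ℝ :=
  sInf {w | ∃ D : Finset V, G.IsStrongDomSet D ∧ w = G.domWeight D}

/-- `f` is a strong-neighbors Roman dominating function (SNRDF). -/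
def IsSNRDF (f : V → ℕ) : Prop :=
  (∀ v, f v ≤ 2) ∧ ∀ v, f v = 0 → ∃ u, G.StrongEdge v u ∧ f u = 2

/-- The weight of an SNRDF. -/
def snrdfWeight [Fintype V] (f : V → ℕ) : ℝ := ∑ v, (f v : ℝ) * G.mus v

/-- The strong-neighbors Roman domination number `γ_snR(G)`. -/
def gammaSnR [Fintype V] : ℝ :=
  sInf {w | ∃ f : V → ℕ, G.IsSNRDF f ∧ w = G.snrdfWeight f}

/-- The fuzzy subgraph induced by the vertices satisfying `p`. -/
def induce (p : V → Prop) : FuzzyGraph {v // p v} where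
  σ v := G.σ v
  μ u v := G.μ u v
  σ_nonneg v := G.σ_nonneg v
  σ_le_one v := G.σ_le_one v
  μ_nonneg u v := G.μ_nonneg u v
  μ_symm u v := G.μ_symm u v
  μ_le u v := G.μ_le u v
  μ_irrefl v := G.μ_irrefl v

/-- The minimum membership value among the strong edges of `G`. -/
def muMin : ℝ := sInf {x | ∃ u v, G.StrongEdge u v ∧ x = G.μ u v}

/-- The complement of a fuzzy graph. -/
def compl : FuzzyGraph V where
  σ := G.σ
  μ u v := if u = v then 0 else min (G.σ u) (G.σ v) - G.μ u v
  σ_nonneg := G.σ_nonneg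
  σ_le_one := G.σ_le_one
  μ_nonneg u v := by
    by_cases h : u = v
    · simp [h]
    · simp only [if_neg h, sub_nonneg]
      exact G.μ_le u v
  μ_symm u v := by
    by_cases h : u = v
    · simp [h]
    · have h' : ¬ v = u := fun hh => h hh.symm
      simp only [if_neg h, if_neg h', min_comm (G.σ u), G.μ_symm u v]
  μ_le u v := by
    by_cases h : u = v
    · subst h
      simp only [if_pos rfl, le_min_iff]
      exact ⟨G.σ_nonneg u, G.σ_nonneg u⟩
    · simp only [if_neg h]
      have := G.μ_nonneg u v
      linarith
  μ_irrefl v := by simp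

end FuzzyGraph


namespace FuzzyGraph

variable {V : Type*} (G : FuzzyGraph V)

lemma ws_cons (a b : V) (t : List V) :
    G.walkStrength (a :: b :: t) = min (G.μ a b) (G.walkStrength (b :: t)) := by
  simp [walkStrength]

lemma ws_le_last : ∀ (t : List V) (a b w : V), (a :: b :: t).getLast? = some w →
    G.walkStrength (a :: b :: t) ≤ G.σ w
  | [], a, b, w, h => by
    simp at h
    subst h
    rw [ws_cons]
    exact le_trans (min_le_left _ _) (le_trans (G.μ_le a b) (min_le_right _ _))
  | c :: t, a, b, w, h => by
    rw [ws_cons]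
    exact le_trans (min_le_right _ _) (ws_le_last t b c w (by simpa using h))

lemma strongEdge_of_eq_min (u v : V) (h : G.μ u v = min (G.σ u) (G.σ v))
    (hpos : 0 < G.μ u v) : G.StrongEdge u v := by
  refine ⟨hpos, ?_⟩
  have hub : ∀ s ∈ {s | ∃ l : List V, G.IsWalk u v l ∧ 2 ≤ l.length ∧ s = G.walkStrength l},
      s ≤ G.μ u v := by
    rintro s ⟨l, ⟨hh, hl, -⟩, hlen, rfl⟩
    cases l with
    | nil => simp at hh
    | cons a l' =>
      cases l' with
      | nil => simp at hlen
      | cons b t =>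
        have ha : a = u := by simpa using hh
        subst ha
        rw [h]
        refine le_min ?_ (G.ws_le_last t a b v hl)
        rw [ws_cons]
        exact le_trans (min_le_left _ _) (le_trans (G.μ_le a b) (min_le_left _ _))
  have hmem : G.μ u v ∈ {s | ∃ l : List V, G.IsWalk u v l ∧ 2 ≤ l.length ∧ s = G.walkStrength l} := by
    refine ⟨[u, v], ⟨rfl, rfl, List.isChain_pair.mpr hpos⟩, by simp, ?_⟩
    rw [ws_cons]
    have h1 : G.walkStrength [v] = 1 := by simp [walkStrength]
    rw [h1]
    have h2 : G.μ u v ≤ 1 :=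
      le_trans (G.μ_le u v) (le_trans (min_le_left _ _) (G.σ_le_one u))
    exact (min_eq_left h2).symm
  exact le_antisymm (le_csSup ⟨G.μ u v, hub⟩ hmem) (csSup_le ⟨_, hmem⟩ hub)

end FuzzyGraph

/-- complete bipartite fuzzy graph with `|X| = 2`, `|Y| ≥ 3`:
`γ_snR = min{4μ_s(x₁), 2μ_s(x₁) + μ_s(x₂)}`. -/
theorem gammaSnR_complete_bipartite_two {V : Type*} [Fintype V]
    (G : FuzzyGraph V) (side : V → Bool)
    (hbip : ∀ u v : V, side u ≠ side v → G.μ u v = min (G.σ u) (G.σ v))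
    (hin : ∀ u v : V, side u = side v → G.μ u v = 0)
    (hσ : ∀ v, 0 < G.σ v)
    (x1 x2 : V) (hne : x1 ≠ x2)
    (hX : ∀ v : V, side v = true ↔ (v = x1 ∨ v = x2))
    (hmu : G.mus x1 ≤ G.mus x2)
    (hcardY : 3 ≤ (Finset.univ.filter fun v : V => side v = false).card) :
    G.gammaSnR = min (4 * G.mus x1) (2 * G.mus x1 + G.mus x2) := by
  classical
  have hsx1 : side x1 = true := (hX x1).mpr (Or.inl rfl)
  have hsx2 : side x2 = true := (hX x2).mpr (Or.inr rfl)
  have hsideF : ∀ v : V, side v ≠ true → side v = false := fun v h => by simpa using h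
  have strong_iff : ∀ u v : V, (G.StrongEdge u v ↔ side u ≠ side v) := by
    intro u v
    constructor
    · intro h hs
      have h1 := h.1
      rw [hin u v hs] at h1
      exact lt_irrefl 0 h1
    · intro hs
      exact G.strongEdge_of_eq_min u v (hbip u v hs)
        (by rw [hbip u v hs]; exact lt_min (hσ u) (hσ v))
  have hneq : ∀ (y x : V), side y = false → side x = true → y ≠ x := by
    intro y x hy hx h
    rw [h, hx] at hy
    exact Bool.noConfusion hy
  have hbdd : ∀ u : V, BddBelow {x | ∃ v, G.StrongEdge u v ∧ x = G.μ u v} :=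
    fun u => ⟨0, by rintro x ⟨v, -, rfl⟩; exact G.μ_nonneg u v⟩
  have hmus_le : ∀ u v : V, G.StrongEdge u v → G.mus u ≤ G.μ u v :=
    fun u v h => csInf_le (hbdd u) ⟨v, h, rfl⟩
  have hle_mus : ∀ (u : V) (c : ℝ) (v0 : V), G.StrongEdge u v0 →
      (∀ v, G.StrongEdge u v → c ≤ G.μ u v) → c ≤ G.mus u := by
    intro u c v0 h0 h
    refine le_csInf ⟨_, v0, h0, rfl⟩ ?_
    rintro x ⟨v, hv, rfl⟩
    exact h v hv
  have hmus0 : ∀ v : V, 0 ≤ G.mus v :=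
    fun v => Real.sInf_nonneg (by rintro x ⟨u, -, rfl⟩; exact G.μ_nonneg _ _)
  have hYne : (Finset.univ.filter fun v : V => side v = false).Nonempty :=
    Finset.card_pos.mp (by omega)
  obtain ⟨y0, hy0mem, hymin⟩ := Finset.exists_min_image _ G.σ hYne
  have hy0 : side y0 = false := (Finset.mem_filter.mp hy0mem).2
  have hsdiff : ∀ u v : V, side u = true → side v = false → side u ≠ side v := by
    intro u v h1 h2 h
    rw [h1, h2] at h
    exact Bool.noConfusion h
  have hstrongXY : ∀ (x y : V), side x = true → side y = false → G.StrongEdge x y :=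
    fun x y h1 h2 => (strong_iff x y).mpr (hsdiff x y h1 h2)
  have hstrongYX : ∀ (y x : V), side y = false → side x = true → G.StrongEdge y x :=
    fun y x h1 h2 => (strong_iff y x).mpr fun h => hsdiff x y h2 h1 h.symm
  have hσmin : ∀ y, side y = false → G.σ y0 ≤ G.σ y :=
    fun y hy => hymin y (Finset.mem_filter.mpr ⟨Finset.mem_univ _, hy⟩)
  have hsideOf : ∀ (x v : V), side x = true → G.StrongEdge x v → side v = false := by
    intro x v hx hv
    refine hsideF v fun h => ?_
    exact (strong_iff x v).mp hv (by rw [hx, h])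
  have a_eq : G.mus x1 = min (G.σ x1) (G.σ y0) := by
    apply le_antisymm
    · rw [← hbip x1 y0 (hsdiff _ _ hsx1 hy0)]
      exact hmus_le _ _ (hstrongXY x1 y0 hsx1 hy0)
    · refine hle_mus x1 _ y0 (hstrongXY x1 y0 hsx1 hy0) ?_
      intro v hv
      have hsv : side v = false := hsideOf x1 v hsx1 hv
      rw [hbip x1 v (hsdiff _ _ hsx1 hsv)]
      exact min_le_min le_rfl (hσmin v hsv)
  have b_eq : G.mus x2 = min (G.σ x2) (G.σ y0) := by
    apply le_antisymm
    · rw [← hbip x2 y0 (hsdiff _ _ hsx2 hy0)]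
      exact hmus_le _ _ (hstrongXY x2 y0 hsx2 hy0)
    · refine hle_mus x2 _ y0 (hstrongXY x2 y0 hsx2 hy0) ?_
      intro v hv
      have hsv : side v = false := hsideOf x2 v hsx2 hv
      rw [hbip x2 v (hsdiff _ _ hsx2 hsv)]
      exact min_le_min le_rfl (hσmin v hsv)
  have ha_le_b' : min (G.σ x1) (G.σ y0) ≤ G.σ x2 := by
    rw [← a_eq]
    exact le_trans hmu (le_trans (le_of_eq b_eq) (min_le_left _ _))
  have key1 : ∀ y, side y = false → G.mus x1 ≤ G.mus y := by
    intro y hy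
    refine hle_mus y _ x1 (hstrongYX y x1 hy hsx1) ?_
    intro v hv
    have hsv : side v = true := by
      refine by_contra fun h => ?_
      have hsv' : side v = false := hsideF v h
      exact (strong_iff y v).mp hv (by rw [hy, hsv'])
    rw [hbip y v fun h => hsdiff v y hsv hy h.symm, a_eq]
    rcases (hX v).mp hsv with rfl | rfl
    · exact le_min (le_trans (min_le_right _ _) (hσmin y hy)) (min_le_left _ _)
    · exact le_min (le_trans (min_le_right _ _) (hσmin y hy)) ha_le_b'
  have key2 : G.mus y0 = G.mus x1 := by
    apply le_antisymm _ (key1 y0 hy0)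
    calc G.mus y0 ≤ G.μ y0 x1 := hmus_le _ _ (hstrongYX y0 x1 hy0 hsx1)
      _ = min (G.σ y0) (G.σ x1) := hbip _ _ fun h => hsdiff x1 y0 hsx1 hy0 h.symm
      _ = min (G.σ x1) (G.σ y0) := min_comm _ _
      _ = G.mus x1 := a_eq.symm
  have hWbdd : BddBelow {w | ∃ f : V → ℕ, G.IsSNRDF f ∧ w = G.snrdfWeight f} := by
    refine ⟨0, ?_⟩
    rintro w ⟨f, -, rfl⟩
    exact Finset.sum_nonneg fun v _ => mul_nonneg (Nat.cast_nonneg _) (hmus0 v)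
  have hy0x1 : y0 ≠ x1 := hneq y0 x1 hy0 hsx1
  have hy0x2 : y0 ≠ x2 := hneq y0 x2 hy0 hsx2
  have hmem1 : (2 * G.mus x1 + G.mus x2) ∈
      {w | ∃ f : V → ℕ, G.IsSNRDF f ∧ w = G.snrdfWeight f} := by
    refine ⟨fun v => if v = x1 then 2 else if v = x2 then 1 else 0, ⟨?_, ?_⟩, ?_⟩
    · intro v
      dsimp only
      split_ifs <;> omega
    · intro v hv
      dsimp only at hv
      have hv1 : v ≠ x1 := by intro h; simp [h] at hv
      have hv2 : v ≠ x2 := by intro h; simp [h, Ne.symm hne] at hv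
      have hsv : side v = false := hsideF v fun h => by
        rcases (hX v).mp h with h' | h'
        exacts [hv1 h', hv2 h']
      exact ⟨x1, hstrongYX v x1 hsv hsx1, by simp⟩
    · have hterm : ∀ v : V,
          ((if v = x1 then 2 else if v = x2 then 1 else 0 : ℕ) : ℝ) * G.mus v
          = (if v = x1 then 2 * G.mus x1 else 0) + (if v = x2 then G.mus x2 else 0) := by
        intro v
        by_cases h1 : v = x1
        · subst h1; simp [hne]
        · by_cases h2 : v = x2
          · subst h2; simp [h1]
          · simp [h1, h2]
      simp only [FuzzyGraph.snrdfWeight]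
      rw [Finset.sum_congr rfl fun v _ => hterm v, Finset.sum_add_distrib,
        Finset.sum_ite_eq' Finset.univ x1, Finset.sum_ite_eq' Finset.univ x2]
      simp
  have hmem2 : (4 * G.mus x1) ∈
      {w | ∃ f : V → ℕ, G.IsSNRDF f ∧ w = G.snrdfWeight f} := by
    refine ⟨fun v => if v = x1 ∨ v = y0 then 2 else 0, ⟨?_, ?_⟩, ?_⟩
    · intro v
      dsimp only
      split_ifs <;> omega
    · intro v hv
      dsimp only at hv
      have hv' : ¬(v = x1 ∨ v = y0) := by
        intro h
        simp [h] at hv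
      push_neg at hv'
      by_cases hsv : side v = true
      · rcases (hX v).mp hsv with rfl | rfl
        · exact absurd rfl hv'.1
        · exact ⟨y0, hstrongXY v y0 hsv hy0, by simp⟩
      · exact ⟨x1, hstrongYX v x1 (hsideF v hsv) hsx1, by simp⟩
    · have hterm : ∀ v : V,
          ((if v = x1 ∨ v = y0 then 2 else 0 : ℕ) : ℝ) * G.mus v
          = (if v = x1 then 2 * G.mus x1 else 0) + (if v = y0 then 2 * G.mus y0 else 0) := by
        intro v
        by_cases h1 : v = x1
        · subst h1; simp [Ne.symm hy0x1]
        · by_cases h2 : v = y0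
          · subst h2; simp [h1]
          · simp [h1, h2]
      simp only [FuzzyGraph.snrdfWeight]
      rw [Finset.sum_congr rfl fun v _ => hterm v, Finset.sum_add_distrib,
        Finset.sum_ite_eq' Finset.univ x1, Finset.sum_ite_eq' Finset.univ y0]
      simp [key2]
      ring
  have hlb : ∀ w ∈ {w | ∃ f : V → ℕ, G.IsSNRDF f ∧ w = G.snrdfWeight f},
      min (4 * G.mus x1) (2 * G.mus x1 + G.mus x2) ≤ w := by
    rintro w ⟨f, ⟨hf2, hfdom⟩, rfl⟩
    have htn : ∀ v : V, 0 ≤ (f v : ℝ) * G.mus v :=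
      fun v => mul_nonneg (Nat.cast_nonneg _) (hmus0 v)
    have hsub : ∀ T : Finset V, ∑ v ∈ T, (f v : ℝ) * G.mus v ≤ G.snrdfWeight f :=
      fun T => Finset.sum_le_sum_of_subset_of_nonneg (Finset.subset_univ T)
        fun v _ _ => htn v
    have hterm_ge : ∀ v : V, 1 ≤ f v → G.mus v ≤ (f v : ℝ) * G.mus v := by
      intro v hv
      nth_rewrite 1 [← one_mul (G.mus v)]
      exact mul_le_mul_of_nonneg_right (by exact_mod_cast hv) (hmus0 v)
    by_cases hfx1 : f x1 = 2
    · by_cases hfx2 : f x2 = 0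
      · obtain ⟨y, hy, hfy⟩ := hfdom x2 hfx2
        have hsy : side y = false := hsideOf x2 y hsx2 hy
        have hyx1 : x1 ≠ y := (hneq y x1 hsy hsx1).symm
        calc min (4 * G.mus x1) (2 * G.mus x1 + G.mus x2) ≤ 4 * G.mus x1 := min_le_left _ _
          _ ≤ 2 * G.mus x1 + 2 * G.mus y := by have := key1 y hsy; linarith
          _ = ∑ v ∈ ({x1, y} : Finset V), (f v : ℝ) * G.mus v := by
              rw [Finset.sum_pair hyx1, hfx1, hfy]; push_cast; ring
          _ ≤ _ := hsub _
      · have h1 : (1 : ℝ) ≤ (f x2 : ℝ) := by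
          exact_mod_cast Nat.one_le_iff_ne_zero.mpr hfx2
        calc min (4 * G.mus x1) (2 * G.mus x1 + G.mus x2)
            ≤ 2 * G.mus x1 + G.mus x2 := min_le_right _ _
          _ ≤ 2 * G.mus x1 + (f x2 : ℝ) * G.mus x2 := by nlinarith [hmus0 x2]
          _ = ∑ v ∈ ({x1, x2} : Finset V), (f v : ℝ) * G.mus v := by
              rw [Finset.sum_pair hne, hfx1]; push_cast; ring
          _ ≤ _ := hsub _
    · by_cases hfx2 : f x2 = 2
      · by_cases hfx1z : f x1 = 0
        · obtain ⟨y, hy, hfy⟩ := hfdom x1 hfx1z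
          have hsy : side y = false := hsideOf x1 y hsx1 hy
          have hyx2 : x2 ≠ y := (hneq y x2 hsy hsx2).symm
          calc min (4 * G.mus x1) (2 * G.mus x1 + G.mus x2) ≤ 4 * G.mus x1 := min_le_left _ _
            _ ≤ 2 * G.mus x2 + 2 * G.mus y := by
                have := key1 y hsy
                linarith
            _ = ∑ v ∈ ({x2, y} : Finset V), (f v : ℝ) * G.mus v := by
                rw [Finset.sum_pair hyx2, hfx2, hfy]; push_cast; ring
            _ ≤ _ := hsub _
        · have hfx11 : f x1 = 1 := by have := hf2 x1; omega
          calc min (4 * G.mus x1) (2 * G.mus x1 + G.mus x2)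
              ≤ 2 * G.mus x1 + G.mus x2 := min_le_right _ _
            _ ≤ 1 * G.mus x1 + 2 * G.mus x2 := by linarith
            _ = ∑ v ∈ ({x1, x2} : Finset V), (f v : ℝ) * G.mus v := by
                rw [Finset.sum_pair hne, hfx11, hfx2]; push_cast; ring
            _ ≤ _ := hsub _
      · have hally : ∀ y, side y = false → 1 ≤ f y := by
          intro y hy
          by_contra h
          obtain ⟨u, hu, hu2⟩ := hfdom y (by omega)
          have hsu : side u = true := by
            refine by_contra fun h' => ?_
            exact (strong_iff y u).mp hu (by rw [hy, hsideF u h'])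
          rcases (hX u).mp hsu with rfl | rfl
          exacts [hfx1 hu2, hfx2 hu2]
        by_cases hz : f x1 = 0 ∨ f x2 = 0
        · have hy1 : ∃ y1, side y1 = false ∧ f y1 = 2 := by
            rcases hz with h | h
            · obtain ⟨y, hy, hfy⟩ := hfdom x1 h
              exact ⟨y, hsideOf x1 y hsx1 hy, hfy⟩
            · obtain ⟨y, hy, hfy⟩ := hfdom x2 h
              exact ⟨y, hsideOf x2 y hsx2 hy, hfy⟩
          obtain ⟨y1, hsy1, hfy1⟩ := hy1
          have hy1mem : y1 ∈ Finset.univ.filter (fun v : V => side v = false) :=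
            Finset.mem_filter.mpr ⟨Finset.mem_univ _, hsy1⟩
          have hcard2 : 1 < ((Finset.univ.filter fun v : V => side v = false).erase y1).card := by
            rw [Finset.card_erase_of_mem hy1mem]; omega
          obtain ⟨y2, hy2, y3, hy3, h23⟩ := Finset.one_lt_card.mp hcard2
          obtain ⟨hy21, hy2f⟩ := Finset.mem_erase.mp hy2
          obtain ⟨hy31, hy3f⟩ := Finset.mem_erase.mp hy3
          have hsy2 : side y2 = false := (Finset.mem_filter.mp hy2f).2
          have hsy3 : side y3 = false := (Finset.mem_filter.mp hy3f).2
          have hnotmem : y1 ∉ ({y2, y3} : Finset V) := by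
            simp only [Finset.mem_insert, Finset.mem_singleton]
            push_neg
            exact ⟨Ne.symm hy21, Ne.symm hy31⟩
          calc min (4 * G.mus x1) (2 * G.mus x1 + G.mus x2) ≤ 4 * G.mus x1 := min_le_left _ _
            _ ≤ (f y1 : ℝ) * G.mus y1 + ((f y2 : ℝ) * G.mus y2 + (f y3 : ℝ) * G.mus y3) := by
                have k1 := key1 y1 hsy1
                have k2 := key1 y2 hsy2
                have k3 := key1 y3 hsy3
                have t2 := hterm_ge y2 (hally y2 hsy2)
                have t3 := hterm_ge y3 (hally y3 hsy3)
                rw [hfy1]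
                push_cast
                linarith
            _ = ∑ v ∈ ({y1, y2, y3} : Finset V), (f v : ℝ) * G.mus v := by
                rw [Finset.sum_insert hnotmem, Finset.sum_pair h23]
            _ ≤ _ := hsub _
        · push_neg at hz
          have h1 := hterm_ge x1 (Nat.one_le_iff_ne_zero.mpr hz.1)
          have h2 := hterm_ge x2 (Nat.one_le_iff_ne_zero.mpr hz.2)
          have h3 := hterm_ge y0 (hally y0 hy0)
          have hnotmem : x1 ∉ ({x2, y0} : Finset V) := by
            simp only [Finset.mem_insert, Finset.mem_singleton]
            push_neg
            exact ⟨hne, Ne.symm hy0x1⟩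
          calc min (4 * G.mus x1) (2 * G.mus x1 + G.mus x2)
              ≤ 2 * G.mus x1 + G.mus x2 := min_le_right _ _
            _ ≤ (f x1 : ℝ) * G.mus x1 + ((f x2 : ℝ) * G.mus x2 + (f y0 : ℝ) * G.mus y0) := by
                have k := key2
                linarith
            _ = ∑ v ∈ ({x1, x2, y0} : Finset V), (f v : ℝ) * G.mus v := by
                rw [Finset.sum_insert hnotmem, Finset.sum_pair (Ne.symm hy0x2)]
            _ ≤ _ := hsub _
  simp only [FuzzyGraph.gammaSnR]
  apply le_antisymm
  · exact le_min (csInf_le hWbdd hmem2) (csInf_le hWbdd hmem1)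
  · exact le_csInf ⟨_, hmem1⟩ hlb
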